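/- Let ρ be a fixed shape of a d-dimensional partition, and let A ∈ M(ρ,∞) with π = Φ(A). Then A(i) > 0 for all top corners i of ρ if and only if shape(π) = ρ. -/

import Mathlib

open scoped BigOperators

noncomputable section

namespace HDP

variable {d : ℕ}

/-- The step `i → i + e_ℓ` in `ℤ₊^d` (coordinates are 0-based). -/
def step (i : Fin d → ℕ) (ℓ : Fin d) : Fin d → ℕ := Function.update i ℓ (i ℓ + 1)

/-- `p` is a directed lattice path of length `n` starting at `i`:
each step goes from a point to the point plus a standard basis vector. -/
def IsPathFrom (i : Fin d → ℕ) (n : ℕ) (p : ℕ → Fin d → ℕ) : Prop :=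
  p 0 = i ∧ ∀ t < n, ∃ ℓ, p (t + 1) = step (p t) ℓ

/-- The last passage time `G(i)`: the maximum, over directed lattice paths starting
at `i`, of the sum of the entries of `A` along the path. -/
def lpt (A : (Fin d → ℕ) → ℕ) (i : Fin d → ℕ) : ℕ :=
  sSup {s | ∃ n p, IsPathFrom i n p ∧ s = ∑ t ∈ Finset.range (n + 1), A (p t)}

/-- A `d`-dimensional partition: a finitely supported function `ℤ₊^d → ℕ`
which is weakly decreasing in each coordinate. -/
def IsPartition (π : (Fin d → ℕ) → ℕ) : Prop :=
  (Function.support π).Finite ∧ ∀ i j : Fin d → ℕ, (∀ k, i k ≤ j k) → π j ≤ π i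

/-- The set of corners of a `d`-dimensional partition `π` : points `(i, k)` of the
diagram of `π` (i.e. `1 ≤ k ≤ π i`) such that `(i + e ℓ, k)` is not in the diagram
for every `ℓ ∈ [d]`. -/
def Cor (π : (Fin d → ℕ) → ℕ) : Set ((Fin d → ℕ) × ℕ) :=
  {p | 1 ≤ p.2 ∧ p.2 ≤ π p.1 ∧ ∀ ℓ, π (step p.1 ℓ) < p.2}

/-- The number of corners of `π`. -/
def cor (π : (Fin d → ℕ) → ℕ) : ℕ := Nat.card (Cor π)

/-- The corner-hook volume of `π`: the sum over corners `(i, k)` of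
`i₁ + ⋯ + i_d - d + 1` (in 1-based coordinates; with our 0-based
coordinates this cohook length is `(∑ j, i j) + 1`). -/
def chvol (π : (Fin d → ℕ) → ℕ) : ℕ := ∑ᶠ p ∈ Cor π, ((∑ j, p.1 j) + 1)

/-- A set is down-closed for the componentwise order. -/
def DownClosed (ρ : Set (Fin d → ℕ)) : Prop :=
  ∀ i j : Fin d → ℕ, (∀ k, i k ≤ j k) → j ∈ ρ → i ∈ ρ

/-- The set of top corners of a shape `ρ`. -/
def Cr (ρ : Set (Fin d → ℕ)) : Set (Fin d → ℕ) := {i ∈ ρ | ∀ ℓ, step i ℓ ∉ ρ}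

end HDP

open HDP

section Aux

variable {d : ℕ}

lemma step_apply (i : Fin d → ℕ) (ℓ k : Fin d) :
    step i ℓ k = if k = ℓ then i ℓ + 1 else i k := by
  unfold step
  rcases eq_or_ne k ℓ with h | h
  · subst h; simp
  · simp [Function.update_of_ne h, h]

lemma le_step (i : Fin d → ℕ) (ℓ k : Fin d) : i k ≤ step i ℓ k := by
  rw [step_apply]
  rcases eq_or_ne k ℓ with h | h
  · subst h; simp
  · rw [if_neg h]

lemma sum_step (i : Fin d → ℕ) (ℓ : Fin d) :
    ∑ k, step i ℓ k = (∑ k, i k) + 1 := by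
  unfold step
  rw [Finset.sum_update_of_mem (Finset.mem_univ ℓ),
      Finset.sum_eq_sum_sdiff_singleton_add (Finset.mem_univ ℓ) i]
  omega

lemma path_le {i : Fin d → ℕ} {n : ℕ} {p : ℕ → Fin d → ℕ}
    (hp : IsPathFrom i n p) : ∀ t, t ≤ n → ∀ k, i k ≤ p t k := by
  intro t
  induction t with
  | zero => intro _ k; rw [hp.1]
  | succ t ih =>
    intro ht k
    obtain ⟨ℓ, hℓ⟩ := hp.2 t (by omega)
    calc i k ≤ p t k := ih (by omega) k
    _ ≤ p (t + 1) k := by rw [hℓ]; exact le_step _ _ _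

lemma path_sum {i : Fin d → ℕ} {n : ℕ} {p : ℕ → Fin d → ℕ}
    (hp : IsPathFrom i n p) : ∀ t, t ≤ n → ∑ k, p t k = (∑ k, i k) + t := by
  intro t
  induction t with
  | zero => intro _; rw [hp.1]; omega
  | succ t ih =>
    intro ht
    obtain ⟨ℓ, hℓ⟩ := hp.2 t (by omega)
    rw [hℓ, sum_step, ih (by omega)]; omega

lemma path_injOn {i : Fin d → ℕ} {n : ℕ} {p : ℕ → Fin d → ℕ}
    (hp : IsPathFrom i n p) :
    Set.InjOn p (Finset.range (n + 1)) := by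
  intro a ha b hb hab
  simp only [Finset.coe_range, Set.mem_Iio] at ha hb
  have h1 := path_sum hp a (by omega)
  have h2 := path_sum hp b (by omega)
  rw [hab] at h1
  omega

lemma lpt_bddAbove {ρ : Set (Fin d → ℕ)} (hfin : ρ.Finite)
    {A : (Fin d → ℕ) → ℕ} (hsupp : Function.support A ⊆ ρ) (i : Fin d → ℕ) :
    ∀ s ∈ {s | ∃ n p, IsPathFrom i n p ∧ s = ∑ t ∈ Finset.range (n + 1), A (p t)},
      s ≤ ∑ x ∈ hfin.toFinset, A x := by
  rintro s ⟨n, p, hp, rfl⟩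
  rw [← Finset.sum_image (f := A) (fun a ha b hb h => path_injOn hp ha hb h)]
  rw [← Finset.sum_filter_of_ne
    (p := fun x => x ∈ hfin.toFinset) (fun x _ hx => by
      simpa using hsupp hx)]
  apply Finset.sum_le_sum_of_subset
  intro x hx
  exact (Finset.mem_filter.mp hx).2

lemma exists_path (j : Fin d → ℕ) :
    ∀ m (i : Fin d → ℕ), (∑ k, (j k - i k)) = m → (∀ k, i k ≤ j k) →
      ∃ n p, IsPathFrom i n p ∧ p n = j := by
  intro m
  induction m with
  | zero =>
    intro i hm hij
    have hji : i = j := by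
      funext k
      have h0 : j k - i k = 0 :=
        Finset.sum_eq_zero_iff.mp hm k (Finset.mem_univ k)
      have := hij k
      omega
    exact ⟨0, fun _ => i, ⟨rfl, fun t ht => by omega⟩, hji⟩
  | succ m ih =>
    intro i hm hij
    have hex : ∃ ℓ, i ℓ < j ℓ := by
      by_contra h
      push_neg at h
      have : ∀ k ∈ Finset.univ, j k - i k = 0 := fun k _ => by
        have := h k; omega
      rw [Finset.sum_eq_zero this] at hm
      omega
    obtain ⟨ℓ, hℓ⟩ := hex
    have hstep : ∀ k, step i ℓ k ≤ j k := by
      intro k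
      rw [step_apply]
      split
      · next h => subst h; omega
      · exact hij k
    have hm' : ∑ k, (j k - step i ℓ k) = m := by
      have h1 : ∑ k, (j k - i k)
          = (∑ k ∈ Finset.univ \ {ℓ}, (j k - i k)) + (j ℓ - i ℓ) :=
        Finset.sum_eq_sum_sdiff_singleton_add (Finset.mem_univ ℓ) _
      have h2 : ∑ k, (j k - step i ℓ k)
          = (∑ k ∈ Finset.univ \ {ℓ}, (j k - step i ℓ k)) + (j ℓ - step i ℓ ℓ) :=
        Finset.sum_eq_sum_sdiff_singleton_add (Finset.mem_univ ℓ) _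
      have h3 : ∑ k ∈ Finset.univ \ {ℓ}, (j k - step i ℓ k)
          = ∑ k ∈ Finset.univ \ {ℓ}, (j k - i k) := by
        apply Finset.sum_congr rfl
        intro k hk
        have hk' : k ≠ ℓ := by simpa using (Finset.mem_sdiff.mp hk).2
        rw [step_apply, if_neg hk']
      have h4 : step i ℓ ℓ = i ℓ + 1 := by rw [step_apply, if_pos rfl]
      omega
    obtain ⟨n, p, hp, hpn⟩ := ih (step i ℓ) hm' hstep
    refine ⟨n + 1, fun t => if t = 0 then i else p (t - 1), ⟨by simp, ?_⟩, by
      simp [hpn]⟩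
    intro t ht
    rcases Nat.eq_zero_or_pos t with h0 | h0
    · subst h0
      exact ⟨ℓ, by simp [hp.1]⟩
    · obtain ⟨s, rfl⟩ := Nat.exists_eq_succ_of_ne_zero (by omega : t ≠ 0)
      obtain ⟨ℓ', hℓ'⟩ := hp.2 s (by omega)
      exact ⟨ℓ', by simp [hℓ']⟩

lemma lpt_ne_zero_iff {ρ : Set (Fin d → ℕ)} (hfin : ρ.Finite)
    {A : (Fin d → ℕ) → ℕ} (hsupp : Function.support A ⊆ ρ) (i : Fin d → ℕ) :
    lpt A i ≠ 0 ↔ ∃ j, (∀ k, i k ≤ j k) ∧ A j ≠ 0 := by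
  set S := {s | ∃ n p, IsPathFrom i n p ∧ s = ∑ t ∈ Finset.range (n + 1), A (p t)}
    with hS
  have hbdd : BddAbove S := ⟨_, lpt_bddAbove hfin hsupp i⟩
  have hne : S.Nonempty :=
    ⟨A i, 0, fun _ => i, ⟨rfl, fun t ht => by omega⟩, by simp⟩
  constructor
  · intro h
    have hmem : sSup S ∈ S := Nat.sSup_mem hne hbdd
    obtain ⟨n, p, hp, hsum⟩ := hmem
    have hpos : ∑ t ∈ Finset.range (n + 1), A (p t) ≠ 0 := by
      rw [← hsum]; exact h
    obtain ⟨t, ht, hAt⟩ := Finset.exists_ne_zero_of_sum_ne_zero hpos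
    exact ⟨p t, path_le hp t (by simpa using Nat.lt_succ_iff.mp (Finset.mem_range.mp ht)), hAt⟩
  · rintro ⟨j, hij, hAj⟩
    obtain ⟨n, p, hp, hpn⟩ := exists_path j _ i rfl hij
    have hmem : (∑ t ∈ Finset.range (n + 1), A (p t)) ∈ S := ⟨n, p, hp, rfl⟩
    have hle : A j ≤ ∑ t ∈ Finset.range (n + 1), A (p t) := by
      rw [← hpn]
      exact Finset.single_le_sum (f := fun t => A (p t)) (fun t _ => Nat.zero_le _)
        (Finset.mem_range.mpr (by omega))
    have := le_csSup hbdd hmem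
    have heq : lpt A i = sSup S := rfl
    omega

end Aux

/-- For `A ∈ M(ρ, ∞)`, the entries of `A` at all top corners of `ρ` are positive
iff the shape of `Φ(A)` is exactly `ρ`. -/
theorem positive_on_topCorners_iff_shape_eq {d : ℕ} (ρ : Set (Fin d → ℕ))
    (hfin : ρ.Finite) (hdown : DownClosed ρ)
    (A : (Fin d → ℕ) → ℕ) (hsupp : Function.support A ⊆ ρ) :
    (∀ i ∈ Cr ρ, 0 < A i) ↔ Function.support (lpt A) = ρ := by
  constructor
  · intro hpos
    ext i
    simp only [Function.mem_support]
    rw [lpt_ne_zero_iff hfin hsupp]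
    constructor
    · rintro ⟨j, hij, hAj⟩
      exact hdown i j hij (hsupp hAj)
    · intro hi
      -- find a maximal element j of {j ∈ ρ | i ≤ j}
      have hsfin : ({j ∈ ρ | ∀ k, i k ≤ j k}).Finite := hfin.subset (fun x hx => hx.1)
      have hsne : ({j ∈ ρ | ∀ k, i k ≤ j k}).Nonempty := ⟨i, hi, fun k => le_rfl⟩
      obtain ⟨j, hj, hjmax⟩ := Set.Finite.exists_maximalFor (fun x => ∑ k, x k) {j ∈ ρ | ∀ k, i k ≤ j k} hsfin hsne
      have hjCr : j ∈ Cr ρ := by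
        refine ⟨hj.1, fun ℓ hℓ => ?_⟩
        have hmem : step j ℓ ∈ {j ∈ ρ | ∀ k, i k ≤ j k} :=
          ⟨hℓ, fun k => le_trans (hj.2 k) (le_step j ℓ k)⟩
        have := hjmax hmem (by beta_reduce; rw [sum_step]; omega)
        beta_reduce at this
        rw [sum_step] at this
        omega
      exact ⟨j, hj.2, (hpos j hjCr).ne'⟩
  · intro hshape i hi
    have hii : lpt A i ≠ 0 := by
      rw [← Function.mem_support, hshape]; exact hi.1
    rw [lpt_ne_zero_iff hfin hsupp] at hii
    obtain ⟨j, hij, hAj⟩ := hii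
    have hjρ : j ∈ ρ := hsupp hAj
    have hji : i = j := by
      by_contra hne
      have : ∃ ℓ, i ℓ < j ℓ := by
        by_contra h
        push_neg at h
        exact hne (funext fun k => le_antisymm (hij k) (h k))
      obtain ⟨ℓ, hℓ⟩ := this
      have hstep : ∀ k, step i ℓ k ≤ j k := by
        intro k
        rw [step_apply]
        split
        · next h => subst h; omega
        · exact hij k
      exact hi.2 ℓ (hdown _ j hstep hjρ)
    rw [hji]
    exact Nat.pos_of_ne_zero hAj
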